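/- For any plane partition π with at most n rows and entries at most m, and its descent set Des(π) = {(i,j) : π_{ij} > π_{i+1,j}}, summing the monomials ∏_{(i,j)∈Des(π)} x_i z_{π_{ij}} over all such plane partitions yields the product ∏_{i=1}^{n} ∏_{ℓ=1}^{m} 1/(1 − x_i z_ℓ) as formal power series. -/

import Mathlib

open scoped BigOperators

/-- A plane partition: a finitely supported `ℕ`-array (0-indexed) weakly
decreasing along rows and columns. -/
structure PlanePartition where
  entry : ℕ → ℕ → ℕ
  row_decr : ∀ i j, entry i (j + 1) ≤ entry i j
  col_decr : ∀ i j, entry (i + 1) j ≤ entry i j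
  finite_support : {p : ℕ × ℕ | entry p.1 p.2 ≠ 0}.Finite

namespace PlanePartition

/-- `π` has at most `n` (nonzero) rows. -/
def RowsLE (π : PlanePartition) (n : ℕ) : Prop := ∀ i j, n ≤ i → π.entry i j = 0

/-- `π` has at most `k` (nonzero) columns. -/
def ColsLE (π : PlanePartition) (k : ℕ) : Prop := ∀ i j, k ≤ j → π.entry i j = 0

/-- all entries of `π` are at most `m`. -/
def EntriesLE (π : PlanePartition) (m : ℕ) : Prop := ∀ i j, π.entry i j ≤ m

/-- The descent set of `π` (0-indexed cells). -/
def Des (π : PlanePartition) : Set (ℕ × ℕ) :=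
  {p | π.entry (p.1 + 1) p.2 < π.entry p.1 p.2}

/-- number of descents of `π`. -/
noncomputable def des (π : PlanePartition) : ℕ := π.Des.ncard

/-- `dmat π i ℓ` is the matrix entry `d_{i+1, ℓ+1}` of `Φ(π)`: the number of columns `j`
with `π_{ij} = ℓ+1 > π_{i+1,j}` (here `i`, `ℓ` are 0-indexed). -/
noncomputable def dmat (π : PlanePartition) (i ℓ : ℕ) : ℕ :=
  {j : ℕ | π.entry i j = ℓ + 1 ∧ π.entry (i + 1) j ≤ ℓ}.ncard

/-- the volume `|π|`. -/
noncomputable def vol (π : PlanePartition) : ℕ := ∑ᶠ p : ℕ × ℕ, π.entry p.1 p.2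

/-- the up-hook volume `|π|_{uh} = Σ_{(i,j) ∈ Des(π)} (π_{ij} + i - 1)` (1-indexed `i`;
in our 0-indexed convention the summand is `π.entry p.1 p.2 + p.1`). -/
noncomputable def uhvol (π : PlanePartition) : ℕ :=
  ∑ᶠ p ∈ π.Des, (π.entry p.1 p.2 + p.1)

/-- the corner volume `|π|_c = Σ_{(i,j) ∈ Des(π)} π_{ij}`. -/
noncomputable def cvol (π : PlanePartition) : ℕ :=
  ∑ᶠ p ∈ π.Des, π.entry p.1 p.2

/-- the trace `tr(π) = Σ_i π_{ii}`. -/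
noncomputable def trace (π : PlanePartition) : ℕ := ∑ᶠ i : ℕ, π.entry i i

/-- `colCount π v` is the number of columns of `π` containing the entry `v`. -/
noncomputable def colCount (π : PlanePartition) (v : ℕ) : ℕ :=
  {j : ℕ | ∃ i, π.entry i j = v}.ncard

/-- the length of row `i` (0-indexed) of `π`. -/
noncomputable def rowLen (π : PlanePartition) (i : ℕ) : ℕ :=
  {j : ℕ | π.entry i j ≠ 0}.ncard

/-- `π` is column-strict: entries strictly decrease down the columns (within the shape). -/
def ColStrict (π : PlanePartition) : Prop :=
  ∀ i j, π.entry i j ≠ 0 → π.entry (i + 1) j < π.entry i j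

/-- the shape of `π` is exactly the rectangle with `n` rows and `k` columns. -/
def ShapeRect (π : PlanePartition) (k n : ℕ) : Prop :=
  ∀ i j, π.entry i j ≠ 0 ↔ i < n ∧ j < k

end PlanePartition

/-- The Schur polynomial `s_{(k^n)}` of rectangular shape `(k^n)` in `N` variables
`x 0, …, x (N-1)`, defined via column-strict plane partitions of shape `(k^n)` with
entries at most `N`; the variable `x i` records entries equal to `i + 1`. -/
noncomputable def schurRect {R : Type*} [CommSemiring R] (k n N : ℕ) (x : ℕ → R) : R :=
  ∑ᶠ π ∈ {π : PlanePartition | π.ColStrict ∧ π.ShapeRect k n ∧ π.EntriesLE N},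
    ∏ i ∈ Finset.range N, x i ^ ({p : ℕ × ℕ | π.entry p.1 p.2 = i + 1}.ncard)


/-- inner fuel-based recursion (over the value `v`, downward). -/
def cA (Di prev : ℕ → ℕ) : ℕ → ℕ → ℕ
  | 0, _ => 0
  | t+1, v => max (cA Di prev t (v+1)) (prev v) + Di (v-1)

/-- outer fuel-based recursion (over the row `i`, downward from `n`). -/
def cGo (m : ℕ) (D : ℕ → ℕ → ℕ) : ℕ → ℕ → ℕ → ℕ
  | 0, _, _ => 0
  | k+1, i, v => cA (D i) (cGo m D k (i+1)) (m + 1 - v) v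

/-- `cF n m D i v` : the number of columns `j` with `π_{i j} ≥ v`, for the plane partition
associated to the matrix `D`. -/
def cF (n m : ℕ) (D : ℕ → ℕ → ℕ) (i v : ℕ) : ℕ := cGo m D (n - i) i v

lemma cF_of_row_ge {n m : ℕ} {D : ℕ → ℕ → ℕ} {i : ℕ} (h : n ≤ i) (v : ℕ) :
    cF n m D i v = 0 := by
  unfold cF
  rw [Nat.sub_eq_zero_of_le h]
  rfl

lemma cF_of_val_gt {n m : ℕ} {D : ℕ → ℕ → ℕ} {v : ℕ} (h : m < v) (i : ℕ) :
    cF n m D i v = 0 := by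
  unfold cF
  rcases h' : n - i with _ | k
  · rfl
  · show cA (D i) (cGo m D k (i+1)) (m + 1 - v) v = 0
    rw [Nat.sub_eq_zero_of_le (by omega)]
    rfl

lemma cF_rec {n m : ℕ} {D : ℕ → ℕ → ℕ} {i v : ℕ} (hi : i < n) (hv : v ≤ m) :
    cF n m D i v = max (cF n m D i (v+1)) (cF n m D (i+1) v) + D i (v-1) := by
  have h1 : n - i = (n - (i+1)) + 1 := by omega
  have h2 : m + 1 - v = (m + 1 - (v+1)) + 1 := by omega
  unfold cF
  rw [h1]
  show cA (D i) (cGo m D (n-(i+1)) (i+1)) (m + 1 - v) v = _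
  rw [h2]
  show max (cA (D i) (cGo m D (n-(i+1)) (i+1)) (m + 1 - (v+1)) (v+1))
      (cGo m D (n-(i+1)) (i+1) v) + D i (v-1) = _
  rfl

lemma cF_succ_le {n m : ℕ} {D : ℕ → ℕ → ℕ} (i v : ℕ) :
    cF n m D i (v+1) ≤ cF n m D i v := by
  rcases le_or_gt n i with h | h
  · rw [cF_of_row_ge h]; exact Nat.zero_le _
  · rcases le_or_gt v m with h' | h'
    · rw [cF_rec h h']
      exact le_trans (le_max_left _ _) (Nat.le_add_right _ _)
    · rw [cF_of_val_gt (by omega)]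
      exact Nat.zero_le _

lemma cF_anti {n m : ℕ} {D : ℕ → ℕ → ℕ} (i : ℕ) {v w : ℕ} (h : v ≤ w) :
    cF n m D i w ≤ cF n m D i v := by
  induction w, h using Nat.le_induction with
  | base => exact le_rfl
  | succ w hw ih => exact le_trans (cF_succ_le i w) ih

lemma cF_row_le {n m : ℕ} {D : ℕ → ℕ → ℕ} (i v : ℕ) :
    cF n m D (i+1) v ≤ cF n m D i v := by
  rcases le_or_gt m v with h' | h'
  · rcases eq_or_lt_of_le h' with rfl | h''
    · rcases le_or_gt n i with h | h
      · rw [cF_of_row_ge (by omega)]; exact Nat.zero_le _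
      · rw [cF_rec h le_rfl]
        exact le_trans (le_max_right _ _) (Nat.le_add_right _ _)
    · rw [cF_of_val_gt h'']; exact Nat.zero_le _
  · rcases le_or_gt n i with h | h
    · rw [cF_of_row_ge (by omega)]; exact Nat.zero_le _
    · rw [cF_rec h (le_of_lt h')]
      exact le_trans (le_max_right _ _) (Nat.le_add_right _ _)

/-- the entry of the plane partition associated to the matrix `D`. -/
noncomputable def entryOf (n m : ℕ) (D : ℕ → ℕ → ℕ) (i j : ℕ) : ℕ :=
  ((Finset.range m).filter fun ℓ => j < cF n m D i (ℓ+1)).card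

lemma entryOf_le (n m : ℕ) (D : ℕ → ℕ → ℕ) (i j : ℕ) : entryOf n m D i j ≤ m := by
  classical
  exact le_trans (Finset.card_filter_le _ _) (le_of_eq (Finset.card_range m))

lemma le_entryOf_iff {n m : ℕ} {D : ℕ → ℕ → ℕ} {i j v : ℕ} (hv : 1 ≤ v) :
    v ≤ entryOf n m D i j ↔ j < cF n m D i v := by
  classical
  constructor
  · intro h
    by_contra hc
    push_neg at hc
    have hsub : ((Finset.range m).filter fun ℓ => j < cF n m D i (ℓ+1)) ⊆
        Finset.range (v-1) := by
      intro ℓ hℓ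
      simp only [Finset.mem_filter, Finset.mem_range] at hℓ
      simp only [Finset.mem_range]
      by_contra hb
      push_neg at hb
      have : cF n m D i (ℓ+1) ≤ cF n m D i v := cF_anti i (by omega)
      omega
    have := Finset.card_le_card hsub
    rw [Finset.card_range] at this
    unfold entryOf at h
    omega
  · intro h
    have hvm : v ≤ m := by
      by_contra hb
      push_neg at hb
      rw [cF_of_val_gt hb] at h
      omega
    have hsub : Finset.range v ⊆
        ((Finset.range m).filter fun ℓ => j < cF n m D i (ℓ+1)) := by
      intro ℓ hℓ
      simp only [Finset.mem_range] at hℓ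
      simp only [Finset.mem_filter, Finset.mem_range]
      refine ⟨by omega, lt_of_lt_of_le h (cF_anti i (by omega))⟩
    have := Finset.card_le_card hsub
    rw [Finset.card_range] at this
    unfold entryOf
    omega

lemma entryOf_pos_row {n m : ℕ} {D : ℕ → ℕ → ℕ} {i j : ℕ} (h : entryOf n m D i j ≠ 0) :
    i < n ∧ j < cF n m D i 1 := by
  have h1 : 1 ≤ entryOf n m D i j := by omega
  have h2 := (le_entryOf_iff le_rfl).1 h1
  refine ⟨?_, h2⟩
  by_contra hb
  push_neg at hb
  rw [cF_of_row_ge hb] at h2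
  omega

/-- the plane partition associated to a matrix `D`. -/
noncomputable def ppOf (n m : ℕ) (D : ℕ → ℕ → ℕ) : PlanePartition where
  entry := entryOf n m D
  row_decr := by
    classical
    intro i j
    apply Finset.card_le_card
    intro ℓ hℓ
    simp only [Finset.mem_filter] at hℓ ⊢
    exact ⟨hℓ.1, by omega⟩
  col_decr := by
    classical
    intro i j
    apply Finset.card_le_card
    intro ℓ hℓ
    simp only [Finset.mem_filter] at hℓ ⊢
    exact ⟨hℓ.1, lt_of_lt_of_le hℓ.2 (cF_row_le i (ℓ+1))⟩
  finite_support := by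
    classical
    apply Set.Finite.subset
      (Finset.finite_toSet ((Finset.range n) ×ˢ
        (Finset.range ((Finset.range n).sup fun i => cF n m D i 1))))
    intro p hp
    simp only [Set.mem_setOf_eq] at hp
    obtain ⟨h1, h2⟩ := entryOf_pos_row hp
    simp only [Finset.coe_product, Set.mem_prod, Finset.mem_coe, Finset.mem_range]
    exact ⟨h1, lt_of_lt_of_le h2 (Finset.le_sup (f := fun i => cF n m D i 1) (Finset.mem_range.2 h1))⟩

lemma ppOf_rowsLE (n m : ℕ) (D : ℕ → ℕ → ℕ) : (ppOf n m D).RowsLE n := by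
  intro i j h
  show entryOf n m D i j = 0
  by_contra hb
  exact absurd (entryOf_pos_row hb).1 (by omega)

lemma ppOf_entriesLE (n m : ℕ) (D : ℕ → ℕ → ℕ) : (ppOf n m D).EntriesLE m :=
  fun i j => entryOf_le n m D i j

lemma dmat_ppOf {n m : ℕ} (D : ℕ → ℕ → ℕ) {i ℓ : ℕ} (hi : i < n) (hl : ℓ < m) :
    (ppOf n m D).dmat i ℓ = D i ℓ := by
  classical
  have hset : {j : ℕ | (ppOf n m D).entry i j = ℓ + 1 ∧ (ppOf n m D).entry (i+1) j ≤ ℓ} =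
      Set.Ico (max (cF n m D i (ℓ+2)) (cF n m D (i+1) (ℓ+1))) (cF n m D i (ℓ+1)) := by
    ext j
    simp only [Set.mem_setOf_eq, Set.mem_Ico, max_le_iff]
    show (entryOf n m D i j = ℓ + 1 ∧ entryOf n m D (i+1) j ≤ ℓ) ↔ _
    constructor
    · rintro ⟨h1, h2⟩
      have ha : j < cF n m D i (ℓ+1) := (le_entryOf_iff (by omega)).1 (by omega)
      have hb : ¬ j < cF n m D i (ℓ+2) := fun hc =>
        absurd ((le_entryOf_iff (v := ℓ+2) (by omega)).2 hc) (by omega)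
      have hcc : ¬ j < cF n m D (i+1) (ℓ+1) := fun hc =>
        absurd ((le_entryOf_iff (v := ℓ+1) (by omega)).2 hc) (by omega)
      exact ⟨⟨by omega, by omega⟩, ha⟩
    · rintro ⟨⟨h1, h2⟩, h3⟩
      have ha : ℓ + 1 ≤ entryOf n m D i j := (le_entryOf_iff (by omega)).2 h3
      have hb : ¬ ℓ + 2 ≤ entryOf n m D i j := fun hc =>
        absurd ((le_entryOf_iff (v := ℓ+2) (by omega)).1 hc) (by omega)
      have hcc : ¬ ℓ + 1 ≤ entryOf n m D (i+1) j := fun hc =>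
        absurd ((le_entryOf_iff (v := ℓ+1) (by omega)).1 hc) (by omega)
      exact ⟨by omega, by omega⟩
  rw [PlanePartition.dmat, hset, ← Finset.coe_Ico, Set.ncard_coe_finset, Nat.card_Ico]
  have hrec := cF_rec (D := D) hi (show ℓ + 1 ≤ m by omega)
  simp only [Nat.add_sub_cancel] at hrec
  rw [hrec]
  exact Nat.add_sub_cancel_left _ _

theorem PlanePartition.ext' {π π' : PlanePartition} (h : π.entry = π'.entry) : π = π' := by
  cases π; cases π'; cases h; rfl

lemma PlanePartition.row_anti (π : PlanePartition) (i : ℕ) {j j' : ℕ} (h : j ≤ j') :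
    π.entry i j' ≤ π.entry i j := by
  induction j', h using Nat.le_induction with
  | base => exact le_rfl
  | succ j' hj ih => exact le_trans (π.row_decr i j') ih

lemma PlanePartition.row_finite (π : PlanePartition) (i : ℕ) :
    {j : ℕ | π.entry i j ≠ 0}.Finite := by
  have : {j : ℕ | π.entry i j ≠ 0} = (fun j => (i, j)) ⁻¹' {p : ℕ × ℕ | π.entry p.1 p.2 ≠ 0} := rfl
  rw [this]
  exact Set.Finite.preimage (fun a _ b _ h => congrArg Prod.snd h) π.finite_support

/-- `Cnum π i v` : the number of columns `j` with `π_{i j} ≥ v`. -/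
noncomputable def Cnum (π : PlanePartition) (i v : ℕ) : ℕ := {j : ℕ | v ≤ π.entry i j}.ncard

lemma Cnum_finite (π : PlanePartition) (i : ℕ) {v : ℕ} (hv : 1 ≤ v) :
    {j : ℕ | v ≤ π.entry i j}.Finite :=
  (π.row_finite i).subset (fun j hj => by simp only [Set.mem_setOf_eq] at hj ⊢; omega)

lemma downclosed_eq_Iio {S : Set ℕ} (hfin : S.Finite)
    (hdc : ∀ j' j, j' ≤ j → j ∈ S → j' ∈ S) : S = Set.Iio S.ncard := by
  classical
  have hcard : S.ncard = hfin.toFinset.card := Set.ncard_eq_toFinset_card S hfin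
  ext k
  simp only [Set.mem_Iio, hcard]
  constructor
  · intro hk
    have hsub : Finset.range (k+1) ⊆ hfin.toFinset := by
      intro x hx
      rw [Set.Finite.mem_toFinset]
      exact hdc x k (by simpa using Nat.lt_succ_iff.1 (Finset.mem_range.1 hx)) hk
    have := Finset.card_le_card hsub
    rw [Finset.card_range] at this
    omega
  · intro hk
    by_contra hkS
    have hsub : hfin.toFinset ⊆ Finset.range k := by
      intro x hx
      rw [Finset.mem_range]
      by_contra hb
      push_neg at hb
      exact hkS (hdc k x hb (hfin.mem_toFinset.1 hx))
    have := Finset.card_le_card hsub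
    rw [Finset.card_range] at this
    omega

lemma lt_Cnum_iff {π : PlanePartition} {i v : ℕ} (hv : 1 ≤ v) (j : ℕ) :
    j < Cnum π i v ↔ v ≤ π.entry i j := by
  have h := downclosed_eq_Iio (Cnum_finite π i hv)
    (fun j' j hle hj => le_trans hj (π.row_anti i hle))
  rw [Cnum]
  constructor
  · intro hj
    have h2 : j ∈ Set.Iio ({j : ℕ | v ≤ π.entry i j}.ncard) := hj
    rw [← h] at h2
    exact h2
  · intro hj
    have h2 : j ∈ {j : ℕ | v ≤ π.entry i j} := hj
    rw [h] at h2
    exact h2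

lemma Cnum_row_ge {π : PlanePartition} {n : ℕ} (hR : π.RowsLE n) {i : ℕ} (hi : n ≤ i)
    {v : ℕ} (hv : 1 ≤ v) : Cnum π i v = 0 := by
  have : {j : ℕ | v ≤ π.entry i j} = ∅ := by
    ext j; simp only [Set.mem_setOf_eq, Set.mem_empty_iff_false, iff_false]
    rw [hR i j hi]; omega
  rw [Cnum, this, Set.ncard_empty]

lemma Cnum_val_gt {π : PlanePartition} {m : ℕ} (hE : π.EntriesLE m) {v : ℕ} (hv : m < v)
    (i : ℕ) : Cnum π i v = 0 := by
  have : {j : ℕ | v ≤ π.entry i j} = ∅ := by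
    ext j; simp only [Set.mem_setOf_eq, Set.mem_empty_iff_false, iff_false]
    have := hE i j; omega
  rw [Cnum, this, Set.ncard_empty]

lemma Cnum_succ_le (π : PlanePartition) (i : ℕ) {v : ℕ} (hv : 1 ≤ v) :
    Cnum π i (v+1) ≤ Cnum π i v :=
  Set.ncard_le_ncard (fun j hj => by simp only [Set.mem_setOf_eq] at hj ⊢; omega)
    (Cnum_finite π i hv)

lemma Cnum_col_le (π : PlanePartition) (i : ℕ) {v : ℕ} (hv : 1 ≤ v) :
    Cnum π (i+1) v ≤ Cnum π i v :=
  Set.ncard_le_ncard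
    (fun j hj => by
      simp only [Set.mem_setOf_eq] at hj ⊢
      exact le_trans hj (π.col_decr i j))
    (Cnum_finite π i hv)

lemma Cnum_rec (π : PlanePartition) (i : ℕ) {v : ℕ} (hv : 1 ≤ v) :
    Cnum π i v = max (Cnum π i (v+1)) (Cnum π (i+1) v) + π.dmat i (v-1) := by
  have hkey : {j : ℕ | π.entry i j = (v-1) + 1 ∧ π.entry (i+1) j ≤ v - 1} =
      Set.Ico (max (Cnum π i (v+1)) (Cnum π (i+1) v)) (Cnum π i v) := by
    ext j
    simp only [Set.mem_setOf_eq, Set.mem_Ico, max_le_iff]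
    have e1 := lt_Cnum_iff (π := π) (i := i) (v := v) hv j
    have e2 := lt_Cnum_iff (π := π) (i := i) (v := v+1) (by omega) j
    have e3 := lt_Cnum_iff (π := π) (i := i+1) (v := v) hv j
    constructor
    · rintro ⟨h1, h2⟩
      have ha : j < Cnum π i v := e1.2 (by omega)
      have hb : ¬ j < Cnum π i (v+1) := fun hc => by have := e2.1 hc; omega
      have hcc : ¬ j < Cnum π (i+1) v := fun hc => by have := e3.1 hc; omega
      exact ⟨⟨by omega, by omega⟩, ha⟩
    · rintro ⟨⟨h1, h2⟩, h3⟩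
      have ha := e1.1 h3
      have hb : ¬ (v + 1 ≤ π.entry i j) := fun hc => by have := e2.2 hc; omega
      have hcc : ¬ (v ≤ π.entry (i+1) j) := fun hc => by have := e3.2 hc; omega
      omega
  have hd : π.dmat i (v-1) = Cnum π i v - max (Cnum π i (v+1)) (Cnum π (i+1) v) := by
    rw [PlanePartition.dmat, hkey, ← Finset.coe_Ico, Set.ncard_coe_finset, Nat.card_Ico]
  have hle : max (Cnum π i (v+1)) (Cnum π (i+1) v) ≤ Cnum π i v :=
    max_le (Cnum_succ_le π i hv) (Cnum_col_le π i hv)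
  set M := max (Cnum π i (v+1)) (Cnum π (i+1) v)
  omega

lemma Cnum_eq_cF {π : PlanePartition} {n m : ℕ} (hR : π.RowsLE n) (hE : π.EntriesLE m)
    (D : ℕ → ℕ → ℕ) (hD : ∀ i ℓ, i < n → ℓ < m → D i ℓ = π.dmat i ℓ) :
    ∀ i v, 1 ≤ v → Cnum π i v = cF n m D i v := by
  have main : ∀ k i, n - i ≤ k → ∀ t v, m + 1 - v ≤ t → 1 ≤ v →
      Cnum π i v = cF n m D i v := by
    intro k
    induction k with
    | zero =>
      intro i hi t v _ hv
      have hin : n ≤ i := by omega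
      rw [Cnum_row_ge hR hin hv, cF_of_row_ge hin]
    | succ k ih =>
      intro i hi t
      induction t with
      | zero =>
        intro v hvt hv
        have hvm : m < v := by omega
        rw [Cnum_val_gt hE hvm, cF_of_val_gt hvm]
      | succ t iht =>
        intro v hvt hv
        rcases le_or_gt n i with hin | hin
        · rw [Cnum_row_ge hR hin hv, cF_of_row_ge hin]
        · rcases le_or_gt v m with hvm | hvm
          · rw [Cnum_rec π i hv, cF_rec hin hvm]
            have r1 : Cnum π i (v+1) = cF n m D i (v+1) :=
              iht (v+1) (by omega) (by omega)
            have r2 : Cnum π (i+1) v = cF n m D (i+1) v :=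
              ih (i+1) (by omega) (m+1-v) v le_rfl hv
            rw [r1, r2, hD i (v-1) hin (by omega)]
          · rw [Cnum_val_gt hE hvm, cF_of_val_gt hvm]
  exact fun i v hv => main (n - i) i le_rfl (m + 1 - v) v le_rfl hv

lemma entry_eq_of_Cnum {π : PlanePartition} {m : ℕ} (hE : π.EntriesLE m) (i j : ℕ) :
    π.entry i j = ((Finset.range m).filter fun ℓ => j < Cnum π i (ℓ+1)).card := by
  classical
  have hfe : ((Finset.range m).filter fun ℓ => j < Cnum π i (ℓ+1)) =
      Finset.range (π.entry i j) := by
    ext ℓ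
    simp only [Finset.mem_filter, Finset.mem_range]
    rw [lt_Cnum_iff (by omega) j]
    have := hE i j
    omega
  rw [hfe, Finset.card_range]

lemma eq_ppOf {π : PlanePartition} {n m : ℕ} (hR : π.RowsLE n) (hE : π.EntriesLE m)
    (D : ℕ → ℕ → ℕ) (hD : ∀ i ℓ, i < n → ℓ < m → D i ℓ = π.dmat i ℓ) :
    π = ppOf n m D := by
  classical
  apply PlanePartition.ext'
  funext i j
  rw [entry_eq_of_Cnum hE i j]
  show _ = entryOf n m D i j
  unfold entryOf
  congr 1
  apply Finset.filter_congr
  intro ℓ _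
  rw [Cnum_eq_cF hR hE D hD i (ℓ+1) (by omega)]

/-- extend a matrix indexed by `Fin n × Fin m` by zero. -/
def extD (n m : ℕ) (k : Fin n → Fin m → ℕ) : ℕ → ℕ → ℕ := fun i ℓ =>
  if h : i < n ∧ ℓ < m then k ⟨i, h.1⟩ ⟨ℓ, h.2⟩ else 0

lemma extD_apply {n m : ℕ} (k : Fin n → Fin m → ℕ) (i : Fin n) (ℓ : Fin m) :
    extD n m k i ℓ = k i ℓ := by
  unfold extD
  rw [dif_pos ⟨i.isLt, ℓ.isLt⟩]

/-- the RSK-type equivalence between bounded plane partitions (with prescribed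
row and value sums of `Φ(π)`) and matrices with these row and column sums. -/
noncomputable def ppEquiv (n m : ℕ) (e : (Fin n ⊕ Fin m) →₀ ℕ) :
    {π : PlanePartition // π.RowsLE n ∧ π.EntriesLE m ∧
      (∀ i : Fin n, e (Sum.inl i) = ∑ ℓ : Fin m, π.dmat i ℓ) ∧
      (∀ ℓ : Fin m, e (Sum.inr ℓ) = ∑ i : Fin n, π.dmat i ℓ)} ≃
    {k : Fin n → Fin m → ℕ //
      (∀ i : Fin n, e (Sum.inl i) = ∑ ℓ : Fin m, k i ℓ) ∧
      (∀ ℓ : Fin m, e (Sum.inr ℓ) = ∑ i : Fin n, k i ℓ)} where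
  toFun π := ⟨fun i ℓ => π.1.dmat i ℓ, π.2.2.2.1, π.2.2.2.2⟩
  invFun k := by
    refine ⟨ppOf n m (extD n m k.1), ppOf_rowsLE n m _, ppOf_entriesLE n m _, ?_, ?_⟩
    · intro i
      rw [k.2.1 i]
      refine Finset.sum_congr rfl fun ℓ _ => ?_
      rw [dmat_ppOf _ i.isLt ℓ.isLt, extD_apply]
    · intro ℓ
      rw [k.2.2 ℓ]
      refine Finset.sum_congr rfl fun i _ => ?_
      rw [dmat_ppOf _ i.isLt ℓ.isLt, extD_apply]
  left_inv π := by
    apply Subtype.ext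
    refine (eq_ppOf π.2.1 π.2.2.1 _ fun i ℓ hi hl => ?_).symm
    show extD n m _ i ℓ = _
    unfold extD
    rw [dif_pos ⟨hi, hl⟩]
  right_inv k := by
    apply Subtype.ext
    funext i ℓ
    show (ppOf n m (extD n m k.1)).dmat i ℓ = k.1 i ℓ
    rw [dmat_ppOf _ i.isLt ℓ.isLt, extD_apply]

open scoped Classical in
open MvPowerSeries in
lemma coeff_inv_one_sub_XX {σ : Type*} [DecidableEq σ] {a b : σ} (hab : a ≠ b) (d : σ →₀ ℕ) :
    MvPowerSeries.coeff d ((1 - MvPowerSeries.X a * MvPowerSeries.X b :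
      MvPowerSeries σ ℚ)⁻¹) =
    if ∃ r : ℕ, d = r • (Finsupp.single a 1 + Finsupp.single b 1) then 1 else 0 := by
  classical
  set u : σ →₀ ℕ := Finsupp.single a 1 + Finsupp.single b 1 with hu
  have hua : u a = 1 := by
    simp [hu, Finsupp.single_apply, hab, Ne.symm hab]
  have hune : u ≠ 0 := by
    intro h
    rw [h] at hua
    simp at hua
  have hX : (X a * X b : MvPowerSeries σ ℚ) = monomial u 1 := by
    rw [X_def, X_def, monomial_mul_monomial, one_mul]
  set g : MvPowerSeries σ ℚ :=
    (fun d' : σ →₀ ℕ => if ∃ r : ℕ, d' = r • u then (1 : ℚ) else 0) with hgdef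
  have hcg : ∀ d' : σ →₀ ℕ,
      coeff d' g = if ∃ r : ℕ, d' = r • u then (1 : ℚ) else 0 := fun d' => rfl
  have hconst : constantCoeff (1 - X a * X b : MvPowerSeries σ ℚ) ≠ 0 := by
    simp only [map_sub, map_mul, constantCoeff_one, constantCoeff_X]
    norm_num
  have hmul : g * (1 - X a * X b) = 1 := by
    ext d'
    rw [mul_sub, mul_one, map_sub, hX, MvPowerSeries.coeff_mul_monomial,
      MvPowerSeries.coeff_one, hcg]
    by_cases hd0 : d' = 0
    · subst hd0
      have e1 : ∃ r : ℕ, (0 : σ →₀ ℕ) = r • u := ⟨0, by simp⟩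
      have e2 : ¬ u ≤ (0 : σ →₀ ℕ) := fun h => hune (le_antisymm h (zero_le (a := u)))
      rw [if_pos e1, if_neg e2, if_pos rfl]
      norm_num
    · rw [if_neg hd0]
      by_cases hA : ∃ r : ℕ, d' = r • u
      · obtain ⟨r, hr⟩ := hA
        have hrpos : r ≠ 0 := by
          rintro rfl
          rw [zero_smul] at hr
          exact hd0 hr
        obtain ⟨s, rfl⟩ : ∃ s, r = s + 1 := ⟨r - 1, by omega⟩
        have hsm : d' = s • u + u := by rw [hr, succ_nsmul]
        have hle : u ≤ d' := hsm ▸ le_add_self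
        have hsub : d' - u = s • u := by rw [hsm, add_tsub_cancel_right]
        rw [if_pos ⟨s + 1, hr⟩, if_pos hle, hcg, if_pos ⟨s, hsub⟩]
        norm_num
      · rw [if_neg hA]
        by_cases hle : u ≤ d'
        · have hno : ¬ ∃ r : ℕ, d' - u = r • u := by
            rintro ⟨r, hr⟩
            exact hA ⟨r + 1, by rw [succ_nsmul, ← hr, tsub_add_cancel_of_le hle]⟩
          rw [if_pos hle, hcg, if_neg hno]
          norm_num
        · rw [if_neg hle]
          norm_num
  have hinv : (1 - X a * X b : MvPowerSeries σ ℚ)⁻¹ = g := by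
    rw [MvPowerSeries.inv_eq_iff_mul_eq_one hconst]
    exact hmul
  rw [hinv]
  exact hcg d

/-- the monomial exponent attached to the cell `p`. -/
noncomputable def uvec (n m : ℕ) (p : Fin n × Fin m) : (Fin n ⊕ Fin m) →₀ ℕ :=
  Finsupp.single (Sum.inl p.1) 1 + Finsupp.single (Sum.inr p.2) 1

lemma uvec_inl {n m : ℕ} (p : Fin n × Fin m) (i : Fin n) :
    uvec n m p (Sum.inl i) = if p.1 = i then 1 else 0 := by
  classical
  simp [uvec, Finsupp.single_apply]

lemma uvec_inr {n m : ℕ} (p : Fin n × Fin m) (ℓ : Fin m) :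
    uvec n m p (Sum.inr ℓ) = if p.2 = ℓ then 1 else 0 := by
  classical
  simp [uvec, Finsupp.single_apply]

section MatrixCount

variable {n m : ℕ} {e : (Fin n ⊕ Fin m) →₀ ℕ}

open scoped Classical in
lemma mem_unpack {l : (Fin n × Fin m) →₀ ((Fin n ⊕ Fin m) →₀ ℕ)}
    (hl : l ∈ (Finset.finsuppAntidiag (Finset.univ : Finset (Fin n × Fin m)) e).filter
      (fun l => ∀ p : Fin n × Fin m, ∃ r : ℕ, l p = r • uvec n m p)) :
    (∑ p : Fin n × Fin m, l p = e) ∧ (∀ p : Fin n × Fin m, ∃ r : ℕ, l p = r • uvec n m p) := by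
  rw [Finset.mem_filter, Finset.mem_finsuppAntidiag] at hl
  exact ⟨hl.1.1, hl.2⟩

open scoped Classical in
lemma sum_inl_of_mem {l : (Fin n × Fin m) →₀ ((Fin n ⊕ Fin m) →₀ ℕ)}
    (hl : l ∈ (Finset.finsuppAntidiag (Finset.univ : Finset (Fin n × Fin m)) e).filter
      (fun l => ∀ p : Fin n × Fin m, ∃ r : ℕ, l p = r • uvec n m p)) (i : Fin n) :
    e (Sum.inl i) = ∑ ℓ : Fin m, l (i, ℓ) (Sum.inl i) := by
  obtain ⟨hsum, hP⟩ := mem_unpack hl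
  have h1 : e (Sum.inl i) = ∑ p : Fin n × Fin m, l p (Sum.inl i) := by
    rw [← hsum, Finsupp.finset_sum_apply]
  rw [h1, Fintype.sum_prod_type]
  refine Fintype.sum_eq_single i fun a ha => ?_
  refine Finset.sum_eq_zero fun b _ => ?_
  obtain ⟨r, hr⟩ := hP (a, b)
  rw [hr, Finsupp.smul_apply, uvec_inl]
  simp [ha]

open scoped Classical in
lemma sum_inr_of_mem {l : (Fin n × Fin m) →₀ ((Fin n ⊕ Fin m) →₀ ℕ)}
    (hl : l ∈ (Finset.finsuppAntidiag (Finset.univ : Finset (Fin n × Fin m)) e).filter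
      (fun l => ∀ p : Fin n × Fin m, ∃ r : ℕ, l p = r • uvec n m p)) (ℓ : Fin m) :
    e (Sum.inr ℓ) = ∑ i : Fin n, l (i, ℓ) (Sum.inl i) := by
  obtain ⟨hsum, hP⟩ := mem_unpack hl
  have h1 : e (Sum.inr ℓ) = ∑ p : Fin n × Fin m, l p (Sum.inr ℓ) := by
    rw [← hsum, Finsupp.finset_sum_apply]
  rw [h1, Fintype.sum_prod_type]
  have h2 : ∀ a : Fin n, (∑ b : Fin m, l (a, b) (Sum.inr ℓ)) = l (a, ℓ) (Sum.inr ℓ) := by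
    intro a
    refine Fintype.sum_eq_single ℓ fun b hb => ?_
    obtain ⟨r, hr⟩ := hP (a, b)
    rw [hr, Finsupp.smul_apply, uvec_inr]
    simp [hb]
  rw [Finset.sum_congr rfl fun a _ => h2 a]
  refine Finset.sum_congr rfl fun a _ => ?_
  obtain ⟨r, hr⟩ := hP (a, ℓ)
  rw [hr, Finsupp.smul_apply, Finsupp.smul_apply, uvec_inr, uvec_inl]
  simp

open scoped Classical in
/-- the equivalence between admissible exponent decompositions and matrices with
prescribed row and column sums. -/
noncomputable def matrixEquiv (n m : ℕ) (e : (Fin n ⊕ Fin m) →₀ ℕ) :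
    {l : (Fin n × Fin m) →₀ ((Fin n ⊕ Fin m) →₀ ℕ) //
      l ∈ (Finset.finsuppAntidiag (Finset.univ : Finset (Fin n × Fin m)) e).filter
        (fun l => ∀ p : Fin n × Fin m, ∃ r : ℕ, l p = r • uvec n m p)} ≃
    {k : Fin n → Fin m → ℕ //
      (∀ i : Fin n, e (Sum.inl i) = ∑ ℓ : Fin m, k i ℓ) ∧
      (∀ ℓ : Fin m, e (Sum.inr ℓ) = ∑ i : Fin n, k i ℓ)} where
  toFun l := ⟨fun i ℓ => l.1 (i, ℓ) (Sum.inl i),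
    fun i => sum_inl_of_mem l.2 i, fun ℓ => sum_inr_of_mem l.2 ℓ⟩
  invFun k := by
    refine ⟨Finsupp.equivFunOnFinite.symm (fun p => k.1 p.1 p.2 • uvec n m p), ?_⟩
    rw [Finset.mem_filter, Finset.mem_finsuppAntidiag]
    refine ⟨⟨?_, Finset.subset_univ _⟩, fun p => ⟨k.1 p.1 p.2, by
      simp [Finsupp.coe_equivFunOnFinite_symm]⟩⟩
    apply Finsupp.ext
    intro x
    rw [Finsupp.finset_sum_apply]
    have hcoe : ∀ p : Fin n × Fin m,
        (Finsupp.equivFunOnFinite.symm (fun p => k.1 p.1 p.2 • uvec n m p)) p =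
        k.1 p.1 p.2 • uvec n m p := fun p => by
      simp [Finsupp.coe_equivFunOnFinite_symm]
    rw [Finset.sum_congr rfl fun p _ => by rw [hcoe p]]
    cases x with
    | inl i =>
      rw [Fintype.sum_prod_type]
      have hz : ∀ a : Fin n, a ≠ i →
          (∑ b : Fin m, (k.1 a b • uvec n m (a, b)) (Sum.inl i)) = 0 := by
        intro a ha
        refine Finset.sum_eq_zero fun b _ => ?_
        rw [Finsupp.smul_apply, uvec_inl]
        simp [ha]
      rw [Fintype.sum_eq_single i hz]
      have : (∑ b : Fin m, (k.1 i b • uvec n m (i, b)) (Sum.inl i)) = ∑ b : Fin m, k.1 i b := by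
        refine Finset.sum_congr rfl fun b _ => ?_
        rw [Finsupp.smul_apply, uvec_inl]
        simp
      rw [this, ← k.2.1 i]
    | inr ℓ =>
      rw [Fintype.sum_prod_type]
      have h2 : ∀ a : Fin n,
          (∑ b : Fin m, (k.1 a b • uvec n m (a, b)) (Sum.inr ℓ)) = k.1 a ℓ := by
        intro a
        have hz : ∀ b : Fin m, b ≠ ℓ → (k.1 a b • uvec n m (a, b)) (Sum.inr ℓ) = 0 := by
          intro b hb
          rw [Finsupp.smul_apply, uvec_inr]
          simp [hb]
        rw [Fintype.sum_eq_single ℓ hz, Finsupp.smul_apply, uvec_inr]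
        simp
      rw [Finset.sum_congr rfl fun a _ => h2 a, ← k.2.2 ℓ]
  left_inv l := by
    apply Subtype.ext
    obtain ⟨-, hP⟩ := mem_unpack l.2
    apply Finsupp.ext
    intro p
    rw [Finsupp.coe_equivFunOnFinite_symm]
    dsimp only
    obtain ⟨r, hr⟩ := hP p
    have hval : (l.1 (p.1, p.2)) (Sum.inl p.1) = r := by
      rw [Prod.mk.eta, hr, Finsupp.smul_apply, uvec_inl]
      simp
    rw [hval]
    exact hr.symm
  right_inv k := by
    apply Subtype.ext
    funext i ℓ
    show (Finsupp.equivFunOnFinite.symm fun p => k.1 p.1 p.2 • uvec n m p) (i, ℓ)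
      (Sum.inl i) = k.1 i ℓ
    rw [Finsupp.coe_equivFunOnFinite_symm, Finsupp.smul_apply, uvec_inl]
    simp

end MatrixCount

open MvPowerSeries in
/-- Coefficient-wise form of
`Σ_π Π_{(i,j)∈Des(π)} x_i z_{π_{ij}} = Π_{i=1}^n Π_{ℓ=1}^m (1 - x_i z_ℓ)⁻¹`,
the sum being over plane partitions with at most `n` rows and entries at most `m`:
the coefficient of a monomial (exponents `e`) in the product equals the number of such
plane partitions whose descent monomial is that monomial, i.e. whose matrix `Φ(π)` has
row sums `e (inl i)` and column (value) sums `e (inr ℓ)`. -/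
theorem multivariate_identity (n m : ℕ) (e : (Fin n ⊕ Fin m) →₀ ℕ) :
    MvPowerSeries.coeff e
      (∏ i : Fin n, ∏ ℓ : Fin m,
        (1 - MvPowerSeries.X (Sum.inl i) * MvPowerSeries.X (Sum.inr ℓ) :
          MvPowerSeries (Fin n ⊕ Fin m) ℚ)⁻¹) =
    Nat.card {π : PlanePartition // π.RowsLE n ∧ π.EntriesLE m ∧
      (∀ i : Fin n, e (Sum.inl i) = ∑ ℓ : Fin m, π.dmat i ℓ) ∧
      (∀ ℓ : Fin m, e (Sum.inr ℓ) = ∑ i : Fin n, π.dmat i ℓ)} := by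
  classical
  have hprod : (∏ i : Fin n, ∏ ℓ : Fin m,
        (1 - MvPowerSeries.X (Sum.inl i) * MvPowerSeries.X (Sum.inr ℓ) :
          MvPowerSeries (Fin n ⊕ Fin m) ℚ)⁻¹) =
      ∏ p : Fin n × Fin m,
        (1 - MvPowerSeries.X (Sum.inl p.1) * MvPowerSeries.X (Sum.inr p.2) :
          MvPowerSeries (Fin n ⊕ Fin m) ℚ)⁻¹ :=
    (Fintype.prod_prod_type (f := fun p : Fin n × Fin m =>
      (1 - MvPowerSeries.X (Sum.inl p.1) * MvPowerSeries.X (Sum.inr p.2) :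
        MvPowerSeries (Fin n ⊕ Fin m) ℚ)⁻¹)).symm
  rw [hprod, MvPowerSeries.coeff_prod]
  have step : ∀ l ∈ Finset.finsuppAntidiag (Finset.univ : Finset (Fin n × Fin m)) e,
      (∏ p : Fin n × Fin m, MvPowerSeries.coeff (l p)
        ((1 - MvPowerSeries.X (Sum.inl p.1) * MvPowerSeries.X (Sum.inr p.2) :
          MvPowerSeries (Fin n ⊕ Fin m) ℚ)⁻¹)) =
      if (∀ p : Fin n × Fin m, ∃ r : ℕ, l p = r • uvec n m p) then (1 : ℚ) else 0 := by
    intro l _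
    have h1 : ∀ p : Fin n × Fin m, MvPowerSeries.coeff (l p)
        ((1 - MvPowerSeries.X (Sum.inl p.1) * MvPowerSeries.X (Sum.inr p.2) :
          MvPowerSeries (Fin n ⊕ Fin m) ℚ)⁻¹) =
        if ∃ r : ℕ, l p = r • uvec n m p then (1 : ℚ) else 0 := by
      intro p
      rw [coeff_inv_one_sub_XX (by simp) (l p)]
      rfl
    rw [Finset.prod_congr rfl fun p _ => h1 p]
    exact Fintype.prod_boole
  rw [Finset.sum_congr rfl step, Finset.sum_boole]
  have hcard : ((Finset.finsuppAntidiag (Finset.univ : Finset (Fin n × Fin m)) e).filter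
      (fun l => ∀ p : Fin n × Fin m, ∃ r : ℕ, l p = r • uvec n m p)).card =
      Nat.card {π : PlanePartition // π.RowsLE n ∧ π.EntriesLE m ∧
        (∀ i : Fin n, e (Sum.inl i) = ∑ ℓ : Fin m, π.dmat i ℓ) ∧
        (∀ ℓ : Fin m, e (Sum.inr ℓ) = ∑ i : Fin n, π.dmat i ℓ)} := by
    rw [← Nat.card_eq_finsetCard]
    exact Nat.card_congr ((matrixEquiv n m e).trans (ppEquiv n m e).symm)
  rw [← hcard]
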